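/- arXiv:2202.03180 — 3 statements merged into one kernel-verified Lean document; each statement's English description precedes it below -/
import Mathlib

section
/- Let h(x) = φ(|x|) with φ : ℝ₊ → ℝ₊ non-increasing, h ∈ L¹_loc(ℝ^d), distribution function r(s), and let Ω ⊂ ℝ^d be a bounded measurable set. Then for every pair of points x₁, x₂ ∈ ℝ^d, ∫_Ω |h(x₁−y) − h(x₂−y)| dy = ∫_0^∞ |Ω ∩ (B_{r(s)}(x₁) Δ B_{r(s)}(x₂))| ds, where Δ denotes symmetric difference. -/
open MeasureTheory Metric Set Filter
open scoped RealInnerProductSpace symmDiff ENNReal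

noncomputable def upperDensity {d : ℕ} (Ω : Set (EuclideanSpace ℝ (Fin d)))
    (x : EuclideanSpace ℝ (Fin d)) : ℝ≥0∞ :=
  Filter.limsup (fun r : ℝ => volume (Ω ∩ Metric.ball x r) / volume (Metric.ball x r))
    (nhdsWithin 0 (Set.Ioi 0))

/-- The essential boundary: points of strictly positive upper density for both `Ω` and `Ωᶜ`. -/
noncomputable def essBoundary {d : ℕ} (Ω : Set (EuclideanSpace ℝ (Fin d))) :
    Set (EuclideanSpace ℝ (Fin d)) :=
  {x | 0 < upperDensity Ω x ∧ 0 < upperDensity Ωᶜ x}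

/-- The distribution function of `φ` on `ℝ₊`: `r s = L¹({x ≥ 0 : φ x > s})`. -/
noncomputable def distrib (φ : ℝ → ℝ) (s : ℝ) : ℝ≥0∞ :=
  volume {x ∈ Set.Ici (0 : ℝ) | s < φ x}

/-- Ball of (possibly infinite) radius `ρ ∈ [0,∞]` centered at `x`. -/
def ballE {d : ℕ} (x : EuclideanSpace ℝ (Fin d)) (ρ : ℝ≥0∞) : Set (EuclideanSpace ℝ (Fin d)) :=
  {y | ENNReal.ofReal (dist x y) < ρ}


lemma aux_interval (a b : ℝ) :
    {s : ℝ | (s < a ∧ ¬ s < b) ∨ (s < b ∧ ¬ s < a)} = Set.Ico (a ⊓ b) (a ⊔ b) := by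
  ext s
  simp only [Set.mem_setOf_eq, Set.mem_Ico, not_lt]
  rcases le_total a b with hab | hab
  · rw [inf_eq_left.mpr hab, sup_eq_right.mpr hab]
    constructor
    · rintro (⟨h1, h2⟩ | ⟨h1, h2⟩) <;> constructor <;> linarith
    · rintro ⟨h1, h2⟩; right; exact ⟨h2, h1⟩
  · rw [inf_eq_right.mpr hab, sup_eq_left.mpr hab]
    constructor
    · rintro (⟨h1, h2⟩ | ⟨h1, h2⟩) <;> constructor <;> linarith
    · rintro ⟨h1, h2⟩; left; exact ⟨h2, h1⟩

lemma ptwise (a b : ℝ) (ha : 0 ≤ a) (hb : 0 ≤ b) :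
    ∫⁻ s in Set.Ioi (0:ℝ),
      (if (s < a ∧ ¬ s < b) ∨ (s < b ∧ ¬ s < a) then (1:ℝ≥0∞) else 0)
      = ENNReal.ofReal |a - b| := by
  have hfun : (fun s : ℝ => if (s < a ∧ ¬ s < b) ∨ (s < b ∧ ¬ s < a) then (1:ℝ≥0∞) else 0)
      = (Set.Ico (a ⊓ b) (a ⊔ b)).indicator (fun _ => 1) := by
    funext s
    rw [Set.indicator_apply]
    exact if_congr (Set.ext_iff.mp (aux_interval a b) s) rfl rfl
  rw [hfun, lintegral_indicator_const measurableSet_Ico,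
    Measure.restrict_apply measurableSet_Ico, one_mul]
  have hvol : volume (Set.Ico (a ⊓ b) (a ⊔ b) ∩ Set.Ioi 0) = ENNReal.ofReal (a ⊔ b - a ⊓ b) := by
    apply le_antisymm
    · calc volume (Set.Ico (a ⊓ b) (a ⊔ b) ∩ Set.Ioi 0) ≤ volume (Set.Ico (a ⊓ b) (a ⊔ b)) :=
            measure_mono Set.inter_subset_left
        _ = ENNReal.ofReal (a ⊔ b - a ⊓ b) := Real.volume_Ico
    · calc ENNReal.ofReal (a ⊔ b - a ⊓ b) = volume (Set.Ioo (a ⊓ b) (a ⊔ b)) :=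
            (Real.volume_Ioo).symm
        _ ≤ volume (Set.Ico (a ⊓ b) (a ⊔ b) ∩ Set.Ioi 0) := by
            apply measure_mono
            intro s hs
            exact ⟨⟨hs.1.le, hs.2⟩, lt_of_le_of_lt (le_inf ha hb) hs.1⟩
  rw [hvol, max_sub_min_eq_abs, abs_sub_comm]


lemma super_ae {d : ℕ} [Nontrivial (EuclideanSpace ℝ (Fin d))] (φ : ℝ → ℝ)
    (hmono : AntitoneOn φ (Set.Ici 0)) (s : ℝ) (x : EuclideanSpace ℝ (Fin d)) :
    {y | s < φ ‖x - y‖} =ᵐ[volume] ballE x (distrib φ s) := by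
  set T : Set ℝ := {r ∈ Set.Ici (0:ℝ) | s < φ r} with hTdef
  have hdist : distrib φ s = volume T := rfl
  have hmemT : ∀ y : EuclideanSpace ℝ (Fin d), s < φ ‖x - y‖ ↔ ‖x - y‖ ∈ T := by
    intro y
    constructor
    · intro h; exact ⟨norm_nonneg _, h⟩
    · intro h; exact h.2
  rcases Set.eq_empty_or_nonempty T with hT | hT
  · have hA : {y : EuclideanSpace ℝ (Fin d) | s < φ ‖x - y‖} = ∅ := by
      ext y
      simp only [Set.mem_setOf_eq, Set.mem_empty_iff_false, iff_false]
      intro h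
      exact Set.notMem_empty _ (hT ▸ (hmemT y).mp h)
    have h0 : distrib φ s = 0 := by rw [hdist, hT, measure_empty]
    have hB : ballE x (distrib φ s) = ∅ := by
      rw [h0]; ext y; simp [ballE]
    rw [hA, hB]
    exact Filter.EventuallyEq.rfl
  · by_cases hbd : BddAbove T
    · set R := sSup T with hR
      have hR0 : 0 ≤ R := by
        obtain ⟨t, ht⟩ := hT
        exact ht.1.trans (le_csSup hbd ht)
      have hIco : Set.Ico 0 R ⊆ T := by
        intro r hr
        obtain ⟨t, htT, hrt⟩ := exists_lt_of_lt_csSup hT hr.2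
        exact ⟨hr.1, lt_of_lt_of_le htT.2 (hmono hr.1 htT.1 hrt.le)⟩
      have hIcc : T ⊆ Set.Icc 0 R := fun t ht => ⟨ht.1, le_csSup hbd ht⟩
      have hvol : distrib φ s = ENNReal.ofReal R := by
        rw [hdist]
        apply le_antisymm
        · calc volume T ≤ volume (Set.Icc 0 R) := measure_mono hIcc
            _ = ENNReal.ofReal R := by rw [Real.volume_Icc, sub_zero]
        · calc ENNReal.ofReal R = volume (Set.Ico 0 R) := by rw [Real.volume_Ico, sub_zero]
            _ ≤ volume T := measure_mono hIco
      have hball : ballE x (ENNReal.ofReal R) = Metric.ball x R := by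
        ext y
        simp only [ballE, Set.mem_setOf_eq, Metric.mem_ball,
          ENNReal.ofReal_lt_ofReal_iff_of_nonneg dist_nonneg, dist_comm]
      rw [hvol, hball]
      have h1 : Metric.ball x R ⊆ {y | s < φ ‖x - y‖} := by
        intro y hy
        exact (hmemT y).mpr (hIco ⟨norm_nonneg _, by rw [← dist_eq_norm]; exact mem_ball'.mp hy⟩)
      have h2 : {y : EuclideanSpace ℝ (Fin d) | s < φ ‖x - y‖} ⊆ Metric.closedBall x R := by
        intro y hy
        have := hIcc ((hmemT y).mp hy)
        rw [Metric.mem_closedBall, dist_comm, dist_eq_norm]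
        exact this.2
      have hsph : volume (Metric.sphere x R) = 0 := Measure.addHaar_sphere volume x R
      rw [Filter.eventuallyEq_set]
      filter_upwards [measure_eq_zero_iff_ae_notMem.mp hsph] with y hy
      constructor
      · intro h
        have hcb := h2 h
        rcases lt_or_eq_of_le (Metric.mem_closedBall.mp hcb) with hlt | heq
        · exact Metric.mem_ball.mpr hlt
        · exact absurd (Metric.mem_sphere.mpr heq) hy
      · intro h; exact h1 h
    · have hT' : T = Set.Ici 0 := by
        ext r
        constructor
        · intro hr; exact hr.1
        · intro hr
          obtain ⟨t, htT, hrt⟩ := not_bddAbove_iff.mp hbd r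
          exact ⟨hr, lt_of_lt_of_le htT.2 (hmono hr htT.1 hrt.le)⟩
      have hvol : distrib φ s = ⊤ := by rw [hdist, hT', Real.volume_Ici]
      have hB : ballE x (distrib φ s) = Set.univ := by
        rw [hvol]; ext y; simp [ballE]
      have hA : {y : EuclideanSpace ℝ (Fin d) | s < φ ‖x - y‖} = Set.univ := by
        ext y
        simp only [Set.mem_setOf_eq, Set.mem_univ, iff_true]
        exact (hmemT y).mpr (hT' ▸ Set.mem_Ici.mpr (norm_nonneg _))
      rw [hA, hB]
      exact Filter.EventuallyEq.rfl

theorem stmt9 {d : ℕ} (φ : ℝ → ℝ) (hmono : AntitoneOn φ (Set.Ici 0))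
    (hnn : ∀ x ∈ Set.Ici (0 : ℝ), 0 ≤ φ x)
    (hloc : MeasureTheory.LocallyIntegrable (fun x : EuclideanSpace ℝ (Fin d) => φ ‖x‖) volume)
    (Ω : Set (EuclideanSpace ℝ (Fin d))) (hΩ : MeasurableSet Ω)
    (hb : Bornology.IsBounded Ω) :
    ∀ x₁ x₂ : EuclideanSpace ℝ (Fin d),
      ∫⁻ y in Ω, ENNReal.ofReal |φ ‖x₁ - y‖ - φ ‖x₂ - y‖|
        = ∫⁻ s in Set.Ioi (0 : ℝ),
            volume (Ω ∩ (symmDiff (ballE x₁ (distrib φ s)) (ballE x₂ (distrib φ s)))) := by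
  intro x₁ x₂
  rcases subsingleton_or_nontrivial (EuclideanSpace ℝ (Fin d)) with hsub | hnt
  · have hx : x₁ = x₂ := Subsingleton.elim _ _
    subst hx
    simp [sub_self, symmDiff_self]
  · -- ψ : measurable antitone extension of φ
    classical
    set ψ : ℝ → ℝ := fun r => φ (r ⊔ 0) with hψdef
    have hψanti : Antitone ψ := fun r r' hrr' =>
      hmono (Set.mem_Ici.mpr le_sup_right) (Set.mem_Ici.mpr le_sup_right) (sup_le_sup_right hrr' 0)
    have hψm : Measurable ψ := hψanti.measurable
    have hψnn : ∀ r, 0 ≤ ψ r := fun r => hnn _ (Set.mem_Ici.mpr le_sup_right)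
    have hrw : ∀ z : EuclideanSpace ℝ (Fin d), φ ‖z‖ = ψ ‖z‖ := fun z => by
      rw [hψdef]; simp [sup_eq_left.mpr (norm_nonneg z)]
    have h1m : Measurable fun y : EuclideanSpace ℝ (Fin d) => ψ ‖x₁ - y‖ :=
      hψm.comp (measurable_const.sub measurable_id).norm
    have h2m : Measurable fun y : EuclideanSpace ℝ (Fin d) => ψ ‖x₂ - y‖ :=
      hψm.comp (measurable_const.sub measurable_id).norm
    set f : ℝ → EuclideanSpace ℝ (Fin d) → ℝ≥0∞ := fun s y =>
      if (s < ψ ‖x₁ - y‖ ∧ ¬ s < ψ ‖x₂ - y‖) ∨ (s < ψ ‖x₂ - y‖ ∧ ¬ s < ψ ‖x₁ - y‖)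
      then 1 else 0 with hfdef
    have step1 : ∫⁻ y in Ω, ENNReal.ofReal |φ ‖x₁ - y‖ - φ ‖x₂ - y‖|
        = ∫⁻ y in Ω, ∫⁻ s in Set.Ioi (0:ℝ), f s y := by
      refine lintegral_congr fun y => ?_
      rw [hrw (x₁ - y), hrw (x₂ - y)]
      exact (ptwise _ _ (hψnn _) (hψnn _)).symm
    -- measurability of uncurried flipped f
    have hS1 : MeasurableSet {p : EuclideanSpace ℝ (Fin d) × ℝ | p.2 < ψ ‖x₁ - p.1‖} :=
      measurableSet_lt measurable_snd (h1m.comp measurable_fst)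
    have hS2 : MeasurableSet {p : EuclideanSpace ℝ (Fin d) × ℝ | p.2 < ψ ‖x₂ - p.1‖} :=
      measurableSet_lt measurable_snd (h2m.comp measurable_fst)
    have hum : Measurable (Function.uncurry fun (y : EuclideanSpace ℝ (Fin d)) (s : ℝ) => f s y) := by
      have : (Function.uncurry fun (y : EuclideanSpace ℝ (Fin d)) (s : ℝ) => f s y)
          = fun p : EuclideanSpace ℝ (Fin d) × ℝ =>
            if (p.2 < ψ ‖x₁ - p.1‖ ∧ ¬ p.2 < ψ ‖x₂ - p.1‖)
              ∨ (p.2 < ψ ‖x₂ - p.1‖ ∧ ¬ p.2 < ψ ‖x₁ - p.1‖) then 1 else 0 := rfl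
      rw [this]
      exact Measurable.ite
        (((hS1.inter hS2.compl).union (hS2.inter hS1.compl))) measurable_const measurable_const
    have step2 : ∫⁻ y in Ω, ∫⁻ s in Set.Ioi (0:ℝ), f s y
        = ∫⁻ s in Set.Ioi (0:ℝ), ∫⁻ y in Ω, f s y :=
      lintegral_lintegral_swap hum.aemeasurable
    have step3 : ∀ s : ℝ, ∫⁻ y in Ω, f s y
        = volume (Ω ∩ (symmDiff {y : EuclideanSpace ℝ (Fin d) | s < ψ ‖x₁ - y‖} {y : EuclideanSpace ℝ (Fin d) | s < ψ ‖x₂ - y‖})) := by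
      intro s
      have hA1 : MeasurableSet {y : EuclideanSpace ℝ (Fin d) | s < ψ ‖x₁ - y‖} := measurableSet_lt measurable_const h1m
      have hA2 : MeasurableSet {y : EuclideanSpace ℝ (Fin d) | s < ψ ‖x₂ - y‖} := measurableSet_lt measurable_const h2m
      have hsd : MeasurableSet (symmDiff {y : EuclideanSpace ℝ (Fin d) | s < ψ ‖x₁ - y‖} {y : EuclideanSpace ℝ (Fin d) | s < ψ ‖x₂ - y‖}) := by
        rw [Set.symmDiff_def]
        exact (hA1.diff hA2).union (hA2.diff hA1)
      have hfs : f s = (symmDiff {y : EuclideanSpace ℝ (Fin d) | s < ψ ‖x₁ - y‖} {y : EuclideanSpace ℝ (Fin d) | s < ψ ‖x₂ - y‖}).indicator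
          (fun _ => (1:ℝ≥0∞)) := by
        funext y
        rw [Set.indicator_apply]
        exact if_congr (by rw [Set.mem_symmDiff]; rfl) rfl rfl
      rw [hfs, lintegral_indicator_const hsd, Measure.restrict_apply hsd, one_mul,
        Set.inter_comm]
    have step4 : ∀ s : ℝ,
        volume (Ω ∩ (symmDiff {y : EuclideanSpace ℝ (Fin d) | s < ψ ‖x₁ - y‖} {y : EuclideanSpace ℝ (Fin d) | s < ψ ‖x₂ - y‖}))
        = volume (Ω ∩ (symmDiff (ballE x₁ (distrib φ s)) (ballE x₂ (distrib φ s)))) := by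
      intro s
      have hA1eq : {y : EuclideanSpace ℝ (Fin d) | s < ψ ‖x₁ - y‖} = {y : EuclideanSpace ℝ (Fin d) | s < φ ‖x₁ - y‖} := by
        ext y; rw [Set.mem_setOf_eq, Set.mem_setOf_eq, hrw]
      have hA2eq : {y : EuclideanSpace ℝ (Fin d) | s < ψ ‖x₂ - y‖} = {y : EuclideanSpace ℝ (Fin d) | s < φ ‖x₂ - y‖} := by
        ext y; rw [Set.mem_setOf_eq, Set.mem_setOf_eq, hrw]
      rw [hA1eq, hA2eq]
      have h₁ := Filter.eventuallyEq_set.mp (super_ae φ hmono s x₁)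
      have h₂ := Filter.eventuallyEq_set.mp (super_ae φ hmono s x₂)
      apply measure_congr
      rw [Filter.eventuallyEq_set]
      filter_upwards [h₁, h₂] with y hy1 hy2
      simp only [Set.mem_inter_iff, Set.mem_symmDiff, Set.mem_setOf_eq, hy1, hy2]
    rw [step1, step2]
    exact lintegral_congr fun s => (step3 s).trans (step4 s)
end

section
/- Let φ : ℝ₊ → ℝ₊ be non-increasing with distribution function r, let η := L¹({φ = ess sup φ}), and let λ > 0. Then L¹({s ∈ ℝ₊ : 0 < r(s) < λ}) > 0 if and only if λ > η. -/
open MeasureTheory Metric Set Filter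
open scoped RealInnerProductSpace symmDiff ENNReal

theorem stmt11 (φ : ℝ → ℝ) (hmono : AntitoneOn φ (Set.Ici 0))
    (hnn : ∀ x ∈ Set.Ici (0 : ℝ), 0 ≤ φ x) (lam : ℝ) (hlam : 0 < lam) :
    0 < volume {s ∈ Set.Ici (0 : ℝ) | 0 < distrib φ s ∧ distrib φ s < ENNReal.ofReal lam} ↔
      volume {x ∈ Set.Ici (0 : ℝ) | ENNReal.ofReal (φ x)
          = essSup (fun x => ENNReal.ofReal (φ x)) (volume.restrict (Set.Ici 0))}
        < ENNReal.ofReal lam := by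
  classical
  set f : ℝ → ℝ≥0∞ := fun x => ENNReal.ofReal (φ x) with hf
  set μ := volume.restrict (Set.Ici (0 : ℝ)) with hμ
  set M := essSup f μ with hM
  set η := volume {x ∈ Set.Ici (0 : ℝ) | f x = M} with hη
  -- restrict applied
  have hres : ∀ t : Set ℝ, μ t = volume (t ∩ Set.Ici 0) := fun t =>
    Measure.restrict_apply' measurableSet_Ici
  -- pointwise bound f x ≤ M for x > 0
  have hfle : ∀ x : ℝ, 0 < x → f x ≤ M := by
    intro x hx
    by_contra h
    push_neg at h
    have hae : μ {y | M < f y} = 0 := by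
      have := ENNReal.ae_le_essSup (μ := μ) f
      simpa [ae_iff, not_le] using this
    have hsub : Set.Ioc (0 : ℝ) x ⊆ {y | M < f y} ∩ Set.Ici 0 := by
      intro y hy
      refine ⟨?_, le_of_lt hy.1⟩
      have : φ x ≤ φ y := hmono (le_of_lt hy.1) (le_of_lt hx) hy.2
      exact lt_of_lt_of_le h (ENNReal.ofReal_le_ofReal this)
    have h0 : volume (Set.Ioc (0 : ℝ) x) = 0 :=
      measure_mono_null hsub (by rw [← hres]; exact hae)
    rw [Real.volume_Ioc] at h0
    simp [ENNReal.ofReal_eq_zero, not_le.mpr hx] at h0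
  -- distrib is antitone
  have hr_anti : ∀ s t : ℝ, s ≤ t → distrib φ t ≤ distrib φ s := by
    intro s t hst
    apply measure_mono
    intro x hx
    exact ⟨hx.1, lt_of_le_of_lt hst hx.2⟩
  -- positivity of distrib below M
  have hApos : ∀ s : ℝ, 0 ≤ s → ENNReal.ofReal s < M → 0 < distrib φ s := by
    intro s hs hsM
    rw [pos_iff_ne_zero]
    intro h0
    have hle : M ≤ ENNReal.ofReal s := by
      apply essSup_le_of_ae_le (hfbdd := by isBoundedDefault)
      change ∀ᵐ x ∂μ, f x ≤ ENNReal.ofReal s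
      rw [ae_iff]
      apply le_antisymm _ zero_le
      rw [hres]
      refine le_trans (measure_mono ?_) (le_of_eq h0)
      intro x hx
      refine ⟨hx.2, ?_⟩
      by_contra hc
      push_neg at hc
      exact absurd (ENNReal.ofReal_le_ofReal hc) (not_le.mpr (not_le.mp hx.1))
    exact absurd hsM (not_lt.mpr hle)
  constructor
  · -- positive measure → η < λ
    intro hpos
    obtain ⟨s, hsmem⟩ := nonempty_of_measure_ne_zero hpos.ne'
    obtain ⟨hs0, hrs, hrslam⟩ := hsmem
    -- find y > 0 with s < φ y
    have hexy : ∃ y, (y ∈ Set.Ici (0:ℝ) ∧ s < φ y) ∧ y ≠ 0 := by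
      by_contra hc
      push_neg at hc
      have : {x ∈ Set.Ici (0:ℝ) | s < φ x} ⊆ {(0:ℝ)} := by
        intro y hy
        simp only [Set.mem_singleton_iff]
        exact hc y ⟨hy.1, hy.2⟩
      have := measure_mono_null this (Real.volume_singleton)
      exact absurd this hrs.ne'
    obtain ⟨y, ⟨hy0, hyφ⟩, hyne⟩ := hexy
    have hypos : 0 < y := lt_of_le_of_ne hy0 (Ne.symm hyne)
    have hsM : ENNReal.ofReal s < M := by
      refine lt_of_lt_of_le ?_ (hfle y hypos)
      exact (ENNReal.ofReal_lt_ofReal_iff (lt_of_le_of_lt hs0 hyφ)).mpr hyφ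
    have hηle : η ≤ distrib φ s := by
      apply measure_mono
      intro x hx
      refine ⟨hx.1, ?_⟩
      by_contra hc
      push_neg at hc
      have : f x ≤ ENNReal.ofReal s := ENNReal.ofReal_le_ofReal hc
      rw [hx.2] at this
      exact absurd hsM (not_lt.mpr this)
    exact lt_of_le_of_lt hηle hrslam
  · -- η < λ → positive measure
    intro hη_lt
    have hηtop : η ≠ ⊤ := (lt_of_lt_of_le hη_lt le_top).ne
    have hMtop : M ≠ ⊤ := by
      have : M ≤ ENNReal.ofReal (φ 0) := by
        apply essSup_le_of_ae_le (hfbdd := by isBoundedDefault)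
        filter_upwards [ae_restrict_mem measurableSet_Ici] with x hx
        exact ENNReal.ofReal_le_ofReal (hmono (Set.mem_Ici.mpr le_rfl) hx hx)
      exact (lt_of_le_of_lt this ENNReal.ofReal_lt_top).ne
    set a := η.toReal with ha
    have halam : a < lam := (ENNReal.lt_ofReal_iff_toReal_lt hηtop).mp hη_lt
    have ha0 : 0 ≤ a := ENNReal.toReal_nonneg
    set x₁ := (a + lam) / 2 with hx₁
    have hx₁pos : 0 < x₁ := by positivity
    have hax₁ : a < x₁ := by simp only [hx₁]; linarith
    have hx₁lam : x₁ < lam := by simp only [hx₁]; linarith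
    have hx₁M : f x₁ < M := by
      refine lt_of_le_of_ne (hfle x₁ hx₁pos) ?_
      intro heq
      have hsub : Set.Ioc (0 : ℝ) x₁ ⊆ {x ∈ Set.Ici (0:ℝ) | f x = M} := by
        intro y hy
        refine ⟨le_of_lt hy.1, le_antisymm (hfle y hy.1) ?_⟩
        rw [← heq]
        exact ENNReal.ofReal_le_ofReal (hmono (le_of_lt hy.1) (le_of_lt hx₁pos) hy.2)
      have hge : ENNReal.ofReal x₁ ≤ η := by
        rw [hη]
        refine le_trans (le_of_eq ?_) (measure_mono hsub)
        rw [Real.volume_Ioc, sub_zero]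
      have : ENNReal.ofReal x₁ ≤ ENNReal.ofReal a := by
        rw [ha, ENNReal.ofReal_toReal hηtop]; exact hge
      rw [ENNReal.ofReal_le_ofReal_iff ha0] at this
      linarith
    set s₀ := φ x₁ with hs₀def
    have hs₀0 : 0 ≤ s₀ := hnn x₁ (le_of_lt hx₁pos)
    have hs₀M : ENNReal.ofReal s₀ < M := hx₁M
    have hr₀ : distrib φ s₀ ≤ ENNReal.ofReal x₁ := by
      have hsub : {x ∈ Set.Ici (0:ℝ) | s₀ < φ x} ⊆ Set.Icc 0 x₁ := by
        intro x hx
        refine ⟨hx.1, ?_⟩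
        by_contra hc
        push_neg at hc
        exact absurd (hmono (le_of_lt hx₁pos) hx.1 (le_of_lt hc)) (not_le.mpr hx.2)
      refine le_trans (measure_mono hsub) (le_of_eq ?_)
      rw [Real.volume_Icc, sub_zero]
    have hr₀lam : distrib φ s₀ < ENNReal.ofReal lam :=
      lt_of_le_of_lt hr₀ ((ENNReal.ofReal_lt_ofReal_iff hlam).mpr hx₁lam)
    set t := M.toReal with ht
    have hs₀t : s₀ < t := (ENNReal.ofReal_lt_iff_lt_toReal hs₀0 hMtop).mp hs₀M
    have hsub : Set.Ico s₀ t ⊆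
        {s ∈ Set.Ici (0:ℝ) | 0 < distrib φ s ∧ distrib φ s < ENNReal.ofReal lam} := by
      intro s hs
      have hs0 : 0 ≤ s := le_trans hs₀0 hs.1
      refine ⟨hs0, hApos s hs0 ?_, lt_of_le_of_lt (hr_anti s₀ s hs.1) hr₀lam⟩
      exact (ENNReal.ofReal_lt_iff_lt_toReal hs0 hMtop).mpr hs.2
    refine lt_of_lt_of_le ?_ (measure_mono hsub)
    rw [Real.volume_Ico]
    exact ENNReal.ofReal_pos.mpr (by linarith)
end

section
/- In ℝ^d with d ≥ 2, let H₀ be a hyperplane with unit normal ν, H₀⁺ its positive closed halfspace, and let p₁ = z + t₁ν, p₂ = z + t₂ν with z ∈ H₀ and 0 < t₂ < t₁ < ρ. Then |H₀⁺ ∩ (B_ρ(p₂) \ B_ρ(p₁))| ≤ 2(d−1)ω_{d−1} ρ^{d−3} t₁² (t₁ − t₂), where ω_{d−1} is the volume of the unit ball in ℝ^{d−1}. -/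
open MeasureTheory Metric Set Filter
open scoped RealInnerProductSpace symmDiff ENNReal

lemma pow_sub_pow_le_aux {a b : ℝ} (hb : 0 ≤ b) (hba : b ≤ a) (n : ℕ) :
    a ^ (n + 1) - b ^ (n + 1) ≤ (n + 1 : ℝ) * a ^ n * (a - b) := by
  have ha : 0 ≤ a := hb.trans hba
  induction n with
  | zero => simp
  | succ m ih =>
    have hbm : b ^ (m + 1) ≤ a ^ (m + 1) := pow_le_pow_left₀ hb hba _
    have h1 : a * (a ^ (m + 1) - b ^ (m + 1)) ≤ a * ((m + 1 : ℝ) * a ^ m * (a - b)) :=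
      mul_le_mul_of_nonneg_left ih ha
    have h2 : (a - b) * b ^ (m + 1) ≤ (a - b) * a ^ (m + 1) :=
      mul_le_mul_of_nonneg_left hbm (by linarith)
    have e1 : a ^ (m + 2) - b ^ (m + 2)
        = a * (a ^ (m + 1) - b ^ (m + 1)) + (a - b) * b ^ (m + 1) := by ring
    have e2 : a * ((m + 1 : ℝ) * a ^ m * (a - b)) + (a - b) * a ^ (m + 1)
        = ((m : ℝ) + 1 + 1) * a ^ (m + 1) * (a - b) := by ring
    push_cast at h1 h2 ⊢
    linarith [e1, e2, h1, h2]

set_option maxHeartbeats 1000000 in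
theorem stmt14 {d : ℕ} (hd : 2 ≤ d) (z ν : EuclideanSpace ℝ (Fin d)) (hν : ‖ν‖ = 1)
    (t₁ t₂ ρ : ℝ) (ht₂ : 0 < t₂) (h12 : t₂ < t₁) (h1ρ : t₁ < ρ) :
    volume ({y : EuclideanSpace ℝ (Fin d) | 0 ≤ ⟪y - z, ν⟫}
        ∩ (Metric.ball (z + t₂ • ν) ρ \ Metric.ball (z + t₁ • ν) ρ)) ≤
      ENNReal.ofReal
        (2 * ((d : ℝ) - 1)
          * (volume (Metric.ball (0 : EuclideanSpace ℝ (Fin (d - 1))) 1)).toReal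
          * ρ ^ ((d : ℝ) - 3) * t₁ ^ 2 * (t₁ - t₂)) := by

  obtain ⟨k, rfl⟩ : ∃ k, d = k + 2 := ⟨d - 2, by omega⟩
  clear hd
  have ht₁ : 0 < t₁ := ht₂.trans h12
  have hρ : 0 < ρ := ht₁.trans h1ρ
  rw [show k + 2 - 1 = k + 1 from rfl]
  -- an orthonormal basis whose first vector is ν
  have hcard : Module.finrank ℝ (EuclideanSpace ℝ (Fin (k + 2)))
      = Fintype.card (Fin (k + 2)) := by simp
  have hon : Orthonormal ℝ (Set.restrict {(0 : Fin (k + 2))} fun _ => ν) := by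
    constructor
    · intro i; exact hν
    · intro i j hij
      exact absurd (Subtype.ext (i.2.trans j.2.symm)) hij
  obtain ⟨b, hb⟩ := hon.exists_orthonormalBasis_extension_of_card_eq hcard
  have hb0 : b 0 = ν := hb 0 rfl
  set e := MeasurableEquiv.piFinSuccAbove (fun _ : Fin (k + 2) => ℝ) 0 with he
  set Φ : EuclideanSpace ℝ (Fin (k + 2)) → ℝ × (Fin (k + 1) → ℝ) := fun y =>
    e ((MeasurableEquiv.toLp 2 (Fin (k + 2) → ℝ)).symm (b.repr (y - z))) with hΦ
  have hΦmp : MeasurePreserving Φ volume volume := by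
    have m1 : MeasurePreserving (fun y : EuclideanSpace ℝ (Fin (k + 2)) => y - z)
        volume volume := measurePreserving_sub_right volume z
    have m4 : MeasurePreserving e (volume : Measure (Fin (k + 2) → ℝ))
        (volume : Measure (ℝ × (Fin (k + 1) → ℝ))) := by
      have hpr : (volume : Measure (ℝ × (Fin (k + 1) → ℝ)))
          = Measure.prod volume (Measure.pi fun _ => volume) := by
        rw [Measure.volume_eq_prod, volume_pi]
      rw [hpr, volume_pi]
      exact measurePreserving_piFinSuccAbove (fun _ : Fin (k + 2) => volume) 0
    exact m4.comp ((EuclideanSpace.volume_preserving_symm_measurableEquiv_toLp (Fin (k + 2))).comp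
      (b.measurePreserving_repr.comp m1))
  set Q : (Fin (k + 1) → ℝ) → ℝ := fun u => ∑ j, (u j) ^ 2 with hQdef
  have hQc : Continuous Q := by
    apply continuous_finset_sum
    intro j _
    exact (continuous_apply j).pow 2
  have hQ0 : ∀ u, 0 ≤ Q u := fun u => Finset.sum_nonneg fun j _ => sq_nonneg _
  set S₂ : Set (ℝ × (Fin (k + 1) → ℝ)) :=
    {p | 0 ≤ p.1 ∧ (p.1 - t₂) ^ 2 + Q p.2 < ρ ^ 2 ∧ ρ ^ 2 ≤ (p.1 - t₁) ^ 2 + Q p.2} with hS₂def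
  have hS₂m : MeasurableSet S₂ := by
    have hrepr : S₂ = {p : ℝ × (Fin (k + 1) → ℝ) | 0 ≤ p.1}
        ∩ ({p | (p.1 - t₂) ^ 2 + Q p.2 < ρ ^ 2} ∩ {p | ρ ^ 2 ≤ (p.1 - t₁) ^ 2 + Q p.2}) := rfl
    have c2 : Continuous fun p : ℝ × (Fin (k + 1) → ℝ) => (p.1 - t₂) ^ 2 + Q p.2 :=
      (((continuous_fst.sub continuous_const).pow 2).add (hQc.comp continuous_snd))
    have c3 : Continuous fun p : ℝ × (Fin (k + 1) → ℝ) => (p.1 - t₁) ^ 2 + Q p.2 :=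
      (((continuous_fst.sub continuous_const).pow 2).add (hQc.comp continuous_snd))
    rw [hrepr]
    exact ((isClosed_le continuous_const continuous_fst).measurableSet).inter
      (((isOpen_lt c2 continuous_const).measurableSet).inter
        ((isClosed_le continuous_const c3).measurableSet))
  have normsq : ∀ w : EuclideanSpace ℝ (Fin (k + 2)), ‖w‖ ^ 2 = ∑ j, (w j) ^ 2 := by
    intro w
    rw [EuclideanSpace.norm_eq, Real.sq_sqrt (by positivity)]
    simp [sq_abs]
  have hset : {y : EuclideanSpace ℝ (Fin (k + 2)) | 0 ≤ ⟪y - z, ν⟫}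
      ∩ (Metric.ball (z + t₂ • ν) ρ \ Metric.ball (z + t₁ • ν) ρ) = Φ ⁻¹' S₂ := by
    ext y
    set x := b.repr (y - z) with hxdef
    have hx0 : x 0 = ⟪y - z, ν⟫ := by
      rw [hxdef, OrthonormalBasis.repr_apply_apply, hb0, real_inner_comm]
    have hΦy : Φ y = (x 0, fun j => x j.succ) := rfl
    have hrν : b.repr ν = EuclideanSpace.single 0 1 := by rw [← hb0, OrthonormalBasis.repr_self]
    have hdist : ∀ t : ℝ, dist y (z + t • ν) ^ 2 = (x 0 - t) ^ 2 + Q (fun j => x j.succ) := by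
      intro t
      have h1 : y - (z + t • ν) = (y - z) - t • ν := by abel
      rw [dist_eq_norm, h1, ← b.repr.norm_map ((y - z) - t • ν), map_sub, _root_.map_smul, ← hxdef,
        hrν, normsq, Fin.sum_univ_succ]
      simp only [PiLp.sub_apply, PiLp.smul_apply, EuclideanSpace.single_apply, smul_eq_mul,
        Fin.succ_ne_zero, if_true, if_false, ite_true, ite_false, reduceIte, mul_one, mul_zero,
        sub_zero]
      rfl
    simp only [mem_inter_iff, mem_setOf_eq, mem_diff, mem_ball, mem_preimage, hΦy, hS₂def]
    constructor
    · rintro ⟨h0, h2, h1⟩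
      rw [not_lt] at h1
      refine ⟨hx0 ▸ h0, ?_, ?_⟩
      · have := hdist t₂
        nlinarith [dist_nonneg (x := y) (y := z + t₂ • ν)]
      · have := hdist t₁
        nlinarith [dist_nonneg (x := y) (y := z + t₁ • ν)]
    · rintro ⟨h0, h2, h1⟩
      refine ⟨hx0 ▸ h0, ?_, ?_⟩
      · have := hdist t₂
        nlinarith [dist_nonneg (x := y) (y := z + t₂ • ν)]
      · rw [not_lt]
        have := hdist t₁
        nlinarith [dist_nonneg (x := y) (y := z + t₁ • ν)]
  have hvolS : volume ({y : EuclideanSpace ℝ (Fin (k + 2)) | 0 ≤ ⟪y - z, ν⟫}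
      ∩ (Metric.ball (z + t₂ • ν) ρ \ Metric.ball (z + t₁ • ν) ρ)) = volume S₂ := by
    rw [hset]
    exact hΦmp.measure_preimage hS₂m.nullMeasurableSet
  -- the annulus
  set rr : ℝ := Real.sqrt (ρ ^ 2 - t₁ ^ 2) with hrrdef
  have hρt : 0 ≤ ρ ^ 2 - t₁ ^ 2 := by nlinarith
  have hrr2 : rr ^ 2 = ρ ^ 2 - t₁ ^ 2 := Real.sq_sqrt hρt
  have hrr0 : 0 ≤ rr := Real.sqrt_nonneg _
  have hrrρ : rr ≤ ρ := by nlinarith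
  set W : Set (Fin (k + 1) → ℝ) := {u | ρ ^ 2 - t₁ ^ 2 ≤ Q u ∧ Q u < ρ ^ 2} with hWdef
  have hWm : MeasurableSet W := by
    have hrepr : W = {u | ρ ^ 2 - t₁ ^ 2 ≤ Q u} ∩ {u | Q u < ρ ^ 2} := rfl
    rw [hrepr]
    exact ((isClosed_le continuous_const hQc).measurableSet).inter
      ((isOpen_lt hQc continuous_const).measurableSet)
  have hsec : ∀ u : Fin (k + 1) → ℝ, volume ((fun a => (a, u)) ⁻¹' S₂)
      ≤ W.indicator (fun _ => ENNReal.ofReal (t₁ - t₂)) u := by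
    intro u
    by_cases hu : u ∈ W
    · rw [indicator_of_mem hu]
      set r := Real.sqrt (ρ ^ 2 - Q u) with hrdef
      have hQu2 : Q u < ρ ^ 2 := hu.2
      have hr2 : r ^ 2 = ρ ^ 2 - Q u := Real.sq_sqrt (by linarith)
      have hrpos : 0 < r := Real.sqrt_pos.mpr (by linarith)
      have hsub : (fun a => (a, u)) ⁻¹' S₂ ⊆ Ioc (t₂ - r) (t₁ - r) := by
        rintro a ⟨ha0, hA, hB⟩
        have h1 : (a - t₂) ^ 2 < r ^ 2 := by rw [hr2]; linarith
        have h2 : r ^ 2 ≤ (a - t₁) ^ 2 := by rw [hr2]; linarith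
        have k2 : 2 * a < t₁ + t₂ := by nlinarith
        have hat : a < t₁ := by linarith
        constructor
        · by_contra hc
          push_neg at hc
          nlinarith
        · by_contra hc
          push_neg at hc
          nlinarith
      calc volume ((fun a => (a, u)) ⁻¹' S₂) ≤ volume (Ioc (t₂ - r) (t₁ - r)) :=
            measure_mono hsub
        _ = ENNReal.ofReal (t₁ - t₂) := by rw [Real.volume_Ioc]; congr 1; ring
    · rw [indicator_of_notMem hu]
      have hempty : (fun a => (a, u)) ⁻¹' S₂ = ∅ := by
        rw [eq_empty_iff_forall_notMem]
        rintro a ⟨ha0, hA, hB⟩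
        have hQρ : Q u < ρ ^ 2 := by nlinarith [sq_nonneg (a - t₂)]
        have hQlt : Q u < ρ ^ 2 - t₁ ^ 2 := by
          by_contra hc
          push_neg at hc
          exact hu ⟨hc, hQρ⟩
        have k1 : (a - t₂) ^ 2 < (a - t₁) ^ 2 := by linarith
        have k2 : 2 * a < t₁ + t₂ := by nlinarith
        have k3 : t₁ ^ 2 < (a - t₁) ^ 2 := by linarith
        have k4 : 0 ≤ a * (2 * t₁ - a) := mul_nonneg ha0 (by linarith)
        nlinarith
      rw [hempty]
      simp
  have hSvol : volume S₂ ≤ ENNReal.ofReal (t₁ - t₂) * volume W := by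
    rw [Measure.volume_eq_prod, Measure.prod_apply_symm hS₂m]
    calc (∫⁻ u, volume ((fun a => (a, u)) ⁻¹' S₂)) ≤
        ∫⁻ u, W.indicator (fun _ => ENNReal.ofReal (t₁ - t₂)) u := lintegral_mono hsec
      _ = ENNReal.ofReal (t₁ - t₂) * volume W := lintegral_indicator_const hWm _
  -- volume of W via the Euclidean annulus
  have hWE : W = (MeasurableEquiv.toLp 2 (Fin (k + 1) → ℝ)).symm.symm ⁻¹'
      (Metric.ball (0 : EuclideanSpace ℝ (Fin (k + 1))) ρ \ Metric.ball (0 : EuclideanSpace ℝ (Fin (k + 1))) rr) := by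
    ext u
    have hnorm : ‖(MeasurableEquiv.toLp 2 (Fin (k + 1) → ℝ)).symm.symm u‖ = Real.sqrt (Q u) := by
      rw [EuclideanSpace.norm_eq]
      congr 1
      refine Finset.sum_congr rfl fun j _ => ?_
      simp [MeasurableEquiv.coe_toLp, PiLp.toLp_apply,
        Real.norm_eq_abs, sq_abs]
    have hQs : Real.sqrt (Q u) ^ 2 = Q u := Real.sq_sqrt (hQ0 u)
    simp only [mem_preimage, mem_diff, mem_ball, dist_zero_right, hnorm, hWdef, mem_setOf_eq]
    constructor
    · rintro ⟨hA, hB⟩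
      refine ⟨(Real.sqrt_lt' hρ).2 hB, ?_⟩
      rw [not_lt, hrrdef]
      exact Real.sqrt_le_sqrt (by linarith)
    · rintro ⟨hA, hB⟩
      rw [not_lt] at hB
      constructor
      · nlinarith [Real.sqrt_nonneg (Q u)]
      · nlinarith [Real.sqrt_nonneg (Q u)]
  have hWvol : volume W ≤ volume (Metric.ball (0 : EuclideanSpace ℝ (Fin (k + 1))) ρ) - volume (Metric.ball (0 : EuclideanSpace ℝ (Fin (k + 1))) rr) := by
    rw [hWE, ((EuclideanSpace.volume_preserving_symm_measurableEquiv_toLp (Fin (k + 1))).symm).measure_preimage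
      (measurableSet_ball.diff measurableSet_ball).nullMeasurableSet]
    rw [measure_diff (ball_subset_ball hrrρ) measurableSet_ball.nullMeasurableSet
      measure_ball_lt_top.ne]
  set ω := volume (Metric.ball (0 : EuclideanSpace ℝ (Fin (k + 1))) 1) with hωdef
  have hωtop : ω ≠ ⊤ := measure_ball_lt_top.ne
  have hωr0 : 0 ≤ ω.toReal := ENNReal.toReal_nonneg
  have hmulω : ∀ c : ℝ, 0 ≤ c → ENNReal.ofReal c * ω = ENNReal.ofReal (c * ω.toReal) := by
    intro c hc
    rw [ENNReal.ofReal_mul hc, ENNReal.ofReal_toReal hωtop]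
  have hballρ : volume (Metric.ball (0 : EuclideanSpace ℝ (Fin (k + 1))) ρ) = ENNReal.ofReal (ρ ^ (k + 1)) * ω := by
    rw [Measure.addHaar_ball volume _ hρ.le]
    rw [finrank_euclideanSpace_fin]
  have hballr : volume (Metric.ball (0 : EuclideanSpace ℝ (Fin (k + 1))) rr) = ENNReal.ofReal (rr ^ (k + 1)) * ω := by
    rw [Measure.addHaar_ball volume _ hrr0]
    rw [finrank_euclideanSpace_fin]
  have hdiff : volume (Metric.ball (0 : EuclideanSpace ℝ (Fin (k + 1))) ρ) - volume (Metric.ball (0 : EuclideanSpace ℝ (Fin (k + 1))) rr)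
      = ENNReal.ofReal (ρ ^ (k + 1) * ω.toReal - rr ^ (k + 1) * ω.toReal) := by
    rw [hballρ, hballr, hmulω _ (by positivity), hmulω _ (by positivity),
      ENNReal.ofReal_sub _ (by positivity)]
  -- the real-number estimate
  have hk1 : ρ ^ (k + 1) - rr ^ (k + 1) ≤ (k + 1 : ℝ) * ρ ^ k * (ρ - rr) :=
    pow_sub_pow_le_aux hrr0 hrrρ k
  have hk2 : (ρ - rr) * ρ ≤ t₁ ^ 2 := by nlinarith [mul_nonneg (sub_nonneg.2 hrrρ) hrr0]
  have hrpow : ρ ^ (((k : ℝ) + 2) - 3) = ρ ^ (k + 1) / ρ ^ 2 := by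
    have hexp : ((k : ℝ) + 2) - 3 = ((k + 1 : ℕ) : ℝ) - ((2 : ℕ) : ℝ) := by push_cast; ring
    rw [hexp, Real.rpow_sub hρ, Real.rpow_natCast, Real.rpow_natCast]
  have hreal : (t₁ - t₂) * (ρ ^ (k + 1) * ω.toReal - rr ^ (k + 1) * ω.toReal)
      ≤ 2 * (((k : ℝ) + 2) - 1) * ω.toReal * ρ ^ (((k : ℝ) + 2) - 3) * t₁ ^ 2 * (t₁ - t₂) := by
    have hk3 : ρ ^ (k + 1) - rr ^ (k + 1) ≤ (k + 1 : ℝ) * ρ ^ k * (t₁ ^ 2 / ρ) := by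
      refine hk1.trans (mul_le_mul_of_nonneg_left ?_ (by positivity))
      rw [le_div_iff₀ hρ]
      exact hk2
    have hk4 : (k + 1 : ℝ) * ρ ^ k * (t₁ ^ 2 / ρ) = (k + 1 : ℝ) * (ρ ^ (k + 1) / ρ ^ 2) * t₁ ^ 2 := by
      field_simp
      ring
    rw [hrpow]
    have hstep : (t₁ - t₂) * (ρ ^ (k + 1) * ω.toReal - rr ^ (k + 1) * ω.toReal)
        ≤ (t₁ - t₂) * (((k + 1 : ℝ) * (ρ ^ (k + 1) / ρ ^ 2) * t₁ ^ 2) * ω.toReal) := by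
      apply mul_le_mul_of_nonneg_left _ (by linarith)
      have : ρ ^ (k + 1) * ω.toReal - rr ^ (k + 1) * ω.toReal
          = (ρ ^ (k + 1) - rr ^ (k + 1)) * ω.toReal := by ring
      rw [this]
      exact mul_le_mul_of_nonneg_right (hk4 ▸ hk3) hωr0
    have hC : 0 ≤ (t₁ - t₂) * (((k + 1 : ℝ) * (ρ ^ (k + 1) / ρ ^ 2) * t₁ ^ 2) * ω.toReal) := by
      have h1 : (0:ℝ) ≤ t₁ - t₂ := by linarith
      positivity
    have hEq : 2 * (((k : ℝ) + 2) - 1) * ω.toReal * (ρ ^ (k + 1) / ρ ^ 2) * t₁ ^ 2 * (t₁ - t₂)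
        = 2 * ((t₁ - t₂) * (((k + 1 : ℝ) * (ρ ^ (k + 1) / ρ ^ 2) * t₁ ^ 2) * ω.toReal)) := by
      ring
    rw [hEq]
    linarith
  -- put everything together
  rw [hvolS]
  have hcast : ((k + 2 : ℕ) : ℝ) = (k : ℝ) + 2 := by push_cast; ring
  rw [hcast]
  calc volume S₂ ≤ ENNReal.ofReal (t₁ - t₂) * volume W := hSvol
    _ ≤ ENNReal.ofReal (t₁ - t₂) *
        (volume (Metric.ball (0 : EuclideanSpace ℝ (Fin (k + 1))) ρ) - volume (Metric.ball (0 : EuclideanSpace ℝ (Fin (k + 1))) rr)) :=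
          mul_le_mul_right hWvol _
    _ = ENNReal.ofReal ((t₁ - t₂) * (ρ ^ (k + 1) * ω.toReal - rr ^ (k + 1) * ω.toReal)) := by
        rw [hdiff, ← ENNReal.ofReal_mul (by linarith)]
    _ ≤ ENNReal.ofReal (2 * (((k : ℝ) + 2) - 1) * ω.toReal
          * ρ ^ (((k : ℝ) + 2) - 3) * t₁ ^ 2 * (t₁ - t₂)) := ENNReal.ofReal_le_ofReal hreal
end
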